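/- Label-extension pruning is exact: Let I be a finite index set, let S_i ⊆ ℝ^K be a finite set and c_i ∈ ℝ^K for each i ∈ I. Then ND(⋃_{i ∈ I} (S_i + {c_i})) = ND(⋃_{i ∈ I} (ND(S_i) + {c_i})), where S + {c} denotes {y + c : y ∈ S}. That is, discarding dominated partial labels before extending them along arcs does not change the resulting nondominated set. -/

import Mathlib

open Pointwise

/-- `y` dominates `y'`: componentwise at least as large and not equal. -/
def dominates {K : ℕ} (y y' : Fin K → ℝ) : Prop :=
  (∀ k, y' k ≤ y k) ∧ y ≠ y'

/-- The nondominated subset of `S`. -/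
def ND {K : ℕ} (S : Set (Fin K → ℝ)) : Set (Fin K → ℝ) :=
  {y ∈ S | ¬ ∃ y' ∈ S, dominates y' y}

/-- In a finite set, every element is weakly dominated by a nondominated element. -/
lemma exists_nd_ge {K : ℕ} {S : Set (Fin K → ℝ)} (hS : S.Finite) {y : Fin K → ℝ}
    (hy : y ∈ S) : ∃ z ∈ ND S, ∀ k, y k ≤ z k := by
  set T : Set (Fin K → ℝ) := {z ∈ S | ∀ k, y k ≤ z k} with hT
  have hTfin : T.Finite := hS.subset (fun z hz => hz.1)
  have hTne : T.Nonempty := ⟨y, hy, fun k => le_rfl⟩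
  obtain ⟨z, hzT, hmax0⟩ := Set.Finite.exists_maximalFor id T hTfin hTne
  have hmax : ∀ a' ∈ T, id z ≤ id a' → id z = id a' := fun a ha h => le_antisymm h (hmax0 ha h)
  refine ⟨z, ⟨hzT.1, ?_⟩, hzT.2⟩
  rintro ⟨y', hy'S, hdom, hne⟩
  exact hne (hmax y' ⟨hy'S, fun k => le_trans (hzT.2 k) (hdom k)⟩
    (fun k => hdom k)).symm

/-- **Label-extension pruning is exact.**  For a finite index set `ι`, finite sets
`S i ⊆ ℝ^K` and vectors `c i ∈ ℝ^K`,
`ND(⋃ i, (S i + {c i})) = ND(⋃ i, (ND(S i) + {c i}))`. -/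
theorem ND_extension_pruning {K : ℕ} {ι : Type*} [Finite ι]
    (S : ι → Set (Fin K → ℝ)) (c : ι → Fin K → ℝ) (hS : ∀ i, (S i).Finite) :
    ND (⋃ i, (fun y => y + c i) '' S i) = ND (⋃ i, (fun y => y + c i) '' ND (S i)) := by
  set A := ⋃ i, (fun y => y + c i) '' S i with hA
  set B := ⋃ i, (fun y => y + c i) '' ND (S i) with hB
  have hBA : B ⊆ A := Set.iUnion_mono fun i =>
    Set.image_mono (fun z hz => hz.1)
  ext y
  constructor
  · rintro ⟨hyA, hynd⟩
    obtain ⟨_, ⟨i, rfl⟩, s, hsS, rfl⟩ := hyA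
    obtain ⟨z, hzND, hzge⟩ := exists_nd_ge (hS i) hsS
    have hzB : z + c i ∈ B := Set.mem_iUnion.2 ⟨i, ⟨z, hzND, rfl⟩⟩
    have hzA : z + c i ∈ A := hBA hzB
    have heq : z + c i = s + c i := by
      by_contra hne
      exact hynd ⟨z + c i, hzA, fun k => add_le_add_left (hzge k) _, hne⟩
    refine ⟨by simpa using heq ▸ hzB, ?_⟩
    rintro ⟨w, hwB, hdom⟩
    exact hynd ⟨w, hBA hwB, hdom⟩
  · rintro ⟨hyB, hynd⟩
    refine ⟨hBA hyB, ?_⟩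
    rintro ⟨w, hwA, hdom, hne⟩
    obtain ⟨_, ⟨i, rfl⟩, s, hsS, rfl⟩ := hwA
    obtain ⟨z, hzND, hzge⟩ := exists_nd_ge (hS i) hsS
    have hzB : z + c i ∈ B := Set.mem_iUnion.2 ⟨i, ⟨z, hzND, rfl⟩⟩
    have hge : ∀ k, y k ≤ (z + c i) k := fun k =>
      le_trans (hdom k) (add_le_add_left (hzge k) _)
    have hne' : z + c i ≠ y := by
      intro heq
      apply hne
      funext k
      have h1 : (s + c i) k ≤ y k := heq ▸ add_le_add_left (hzge k) _
      exact le_antisymm h1 (hdom k)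
    exact hynd ⟨z + c i, hzB, hge, hne'⟩
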